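/- Let H₀ and H_I be Hermitian operators on a finite-dimensional complex Hilbert space H of dimension n, and α ∈ ℝ. Set H_I^{(α)} = H_I − α·I. A unit vector ψ satisfies exp(−it(H₀+H_I)) ψ = exp(−iαt) exp(−itH₀) ψ for all t ∈ ℝ if and only if ψ ∈ Ker(H_I^{(α)}) ∩ Ker(H_I^{(α)} H₀) ∩ ... ∩ Ker(H_I^{(α)} H₀^{n−1}). -/

import Mathlib

open NormedSpace

section Aux
open NormedSpace

variable {H : Type*} [NormedAddCommGroup H] [InnerProductSpace ℂ H] [FiniteDimensional ℂ H]

lemma aux_exp_of_pow {M N : H →L[ℂ] H} {ψ : H}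
    (h : ∀ k, (M ^ k) ψ = (N ^ k) ψ) (c : ℂ) :
    exp (c • M) ψ = exp (c • N) ψ := by
  have key : ∀ T : H →L[ℂ] H,
      exp (c • T) ψ = ∑' k : ℕ, (k.factorial : ℂ)⁻¹ • c ^ k • (T ^ k) ψ := by
    intro T
    have hs := expSeries_summable' (𝕂 := ℂ) (c • T)
    rw [exp_eq_tsum (𝕂 := ℂ)]
    have h2 := (ContinuousLinearMap.apply ℂ H ψ).map_tsum hs
    simp only [ContinuousLinearMap.apply_apply] at h2
    rw [h2]
    congr 1
    funext k
    simp [smul_pow, ContinuousLinearMap.smul_apply]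
  rw [key M, key N]
  congr 1
  funext k
  rw [h k]

lemma aux_pow_of_exp {M N : H →L[ℂ] H} {ψ : H}
    (h : ∀ t : ℝ, exp (t • M) ψ = exp (t • N) ψ) (k : ℕ) :
    (M ^ k) ψ = (N ^ k) ψ := by
  have main : ∀ k, ∀ t : ℝ, exp (t • M) ((M ^ k) ψ) = exp (t • N) ((N ^ k) ψ) := by
    intro k
    induction k with
    | zero => simpa using h
    | succ k ih =>
      intro t
      have deriv : ∀ T : H →L[ℂ] H,
          HasDerivAt (fun u : ℝ => exp (u • T) ((T ^ k) ψ))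
            (exp (t • T) ((T ^ (k + 1)) ψ)) t := by
        intro T
        have hd := hasDerivAt_exp_smul_const (𝕂 := ℝ) (𝔸 := H →L[ℂ] H) T t
        set L := ((ContinuousLinearMap.apply ℂ H ((T ^ k) ψ)).restrictScalars ℝ :
          (H →L[ℂ] H) →L[ℝ] H) with hL
        have h1 := L.hasFDerivAt.comp_hasDerivAt t hd
        have h3 : L (exp (t • T) * T) = exp (t • T) ((T ^ (k + 1)) ψ) := by
          show (exp (t • T) * T) ((T ^ k) ψ) = _
          rw [ContinuousLinearMap.mul_apply, pow_succ', ContinuousLinearMap.mul_apply]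
        exact h3 ▸ h1
      have hM := deriv M
      have hN := deriv N
      have hM' : HasDerivAt (fun u : ℝ => exp (u • N) ((N ^ k) ψ))
          (exp (t • M) ((M ^ (k + 1)) ψ)) t := by
        have heq : (fun u : ℝ => exp (u • M) ((M ^ k) ψ))
            = (fun u : ℝ => exp (u • N) ((N ^ k) ψ)) := funext ih
        rwa [heq] at hM
      exact hM'.unique hN
  have h0 := main k 0
  simpa using h0

lemma aux_aeval {D T : H →L[ℂ] H} {ψ : H}
    (h : ∀ m : ℕ, D ((T ^ m) ψ) = 0) (q : Polynomial ℂ) :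
    D ((Polynomial.aeval T q) ψ) = 0 := by
  induction q using Polynomial.induction_on' with
  | add p q hp hq => simp [ContinuousLinearMap.add_apply, hp, hq]
  | monomial i c =>
    simp only [Polynomial.aeval_monomial, Algebra.algebraMap_eq_smul_one,
      smul_mul_assoc, one_mul, ContinuousLinearMap.smul_apply, map_smul, h, smul_zero]



lemma aux_span {T : H →L[ℂ] H} {ψ : H} {n : ℕ} (hn : n = Module.finrank ℂ H)
    (m : ℕ) :
    (T ^ m) ψ ∈ Submodule.span ℂ ((fun k : ℕ => (T ^ k) ψ) '' Set.Iio n) := by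
  set f := (T : H →ₗ[ℂ] H) with hf
  have hpow : ∀ (i : ℕ) (φ : H), (f ^ i) φ = (T ^ i) φ := by
    intro i
    induction i with
    | zero => intro φ; rfl
    | succ i ih =>
      intro φ
      rw [pow_succ, pow_succ, Module.End.mul_apply, ContinuousLinearMap.mul_apply]
      exact ih (T φ)
  have hdeg : f.charpoly.natDegree = n := by
    rw [LinearMap.charpoly_natDegree, hn]
  have hc : f.charpoly.coeff n = 1 := by
    rw [← hdeg]; exact (LinearMap.charpoly_monic f).coeff_natDegree
  have hsum : (0 : H →ₗ[ℂ] H) = ∑ i ∈ Finset.range (n + 1), f.charpoly.coeff i • f ^ i := by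
    have := Polynomial.aeval_eq_sum_range (p := f.charpoly) f
    rwa [LinearMap.aeval_self_charpoly, hdeg] at this
  have hrec : ∀ φ : H, (T ^ n) φ = ∑ i ∈ Finset.range n, (-f.charpoly.coeff i) • (T ^ i) φ := by
    intro φ
    have h3 : (∑ i ∈ Finset.range (n + 1), f.charpoly.coeff i • f ^ i) φ = 0 := by
      rw [← hsum]; rfl
    rw [LinearMap.sum_apply] at h3
    simp only [LinearMap.smul_apply] at h3
    rw [Finset.sum_range_succ, hc, one_smul] at h3
    have h4 := eq_neg_of_add_eq_zero_right h3
    rw [← hpow n φ, h4, ← Finset.sum_neg_distrib]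
    exact Finset.sum_congr rfl fun i _ => by rw [← neg_smul, hpow]
  induction m using Nat.strong_induction_on with
  | _ m ih =>
    by_cases hm : m < n
    · exact Submodule.subset_span ⟨m, hm, rfl⟩
    · push_neg at hm
      have hmn : m = (m - n) + n := by omega
      rw [hmn, pow_add, ContinuousLinearMap.mul_apply, hrec ψ, map_sum]
      apply Submodule.sum_mem
      intro i hi
      rw [Finset.mem_range] at hi
      rw [map_smul]
      apply Submodule.smul_mem
      have : (T ^ (m - n)) ((T ^ i) ψ) = (T ^ (m - n + i)) ψ := by
        rw [pow_add, ContinuousLinearMap.mul_apply]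
      rw [this]
      exact ih (m - n + i) (by omega)
end Aux


/-- A unit vector `ψ` satisfies `exp(-it(H₀+H_I)) ψ = exp(-iαt) exp(-itH₀) ψ` for all real
`t` iff `ψ ∈ Ker H_I^(α) ∩ Ker (H_I^(α) H₀) ∩ ... ∩ Ker (H_I^(α) H₀^(n-1))`,
where `H_I^(α) = H_I - α·I`. -/
theorem stmt9 {H : Type*} [NormedAddCommGroup H] [InnerProductSpace ℂ H]
    [FiniteDimensional ℂ H] (n : ℕ) (hn : n = Module.finrank ℂ H)
    (H0 HI : H →L[ℂ] H) (h0 : IsSelfAdjoint H0) (hI : IsSelfAdjoint HI)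
    (α : ℝ) (ψ : H) (hψ : ‖ψ‖ = 1) :
    (∀ t : ℝ,
        exp ((-Complex.I * t) • (H0 + HI)) ψ
          = Complex.exp (-Complex.I * α * t) • exp ((-Complex.I * t) • H0) ψ) ↔
      ∀ k < n, (HI - (α : ℂ) • 1) ((H0 ^ k) ψ) = 0 := by
  set A : H →L[ℂ] H := H0 + (α : ℂ) • 1 with hA
  set B : H →L[ℂ] H := H0 + HI with hB
  set D : H →L[ℂ] H := HI - (α : ℂ) • 1 with hD
  -- rewrite the right-hand side of the evolution condition
  have hexp : ∀ t : ℝ, Complex.exp (-Complex.I * α * t) • exp ((-Complex.I * t) • H0) ψ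
      = exp ((-Complex.I * t) • A) ψ := by
    intro t
    have hsplit : (-Complex.I * t) • A
        = (-Complex.I * α * t) • (1 : H →L[ℂ] H) + (-Complex.I * t) • H0 := by
      rw [hA, smul_add, smul_smul]
      rw [show -Complex.I * t * α = -Complex.I * α * t by ring, add_comm]
    have hcomm : Commute ((-Complex.I * α * t) • (1 : H →L[ℂ] H)) ((-Complex.I * t) • H0) :=
      (Commute.one_left _).smul_left _
    rw [hsplit, exp_add_of_commute_of_mem_ball (𝕂 := ℂ) hcomm
      ((expSeries_radius_eq_top ℂ (H →L[ℂ] H)).symm ▸ edist_lt_top _ _)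
      ((expSeries_radius_eq_top ℂ (H →L[ℂ] H)).symm ▸ edist_lt_top _ _)]
    have h1 : exp ((-Complex.I * α * t) • (1 : H →L[ℂ] H))
        = Complex.exp (-Complex.I * α * t) • (1 : H →L[ℂ] H) := by
      rw [← Algebra.algebraMap_eq_smul_one, ← algebraMap_exp_comm,
        Algebra.algebraMap_eq_smul_one, Complex.exp_eq_exp_ℂ]
    rw [h1, smul_mul_assoc, one_mul, ContinuousLinearMap.smul_apply]
  -- the condition is equivalent to exponentials of B and A agreeing on ψ
  have hcond : (∀ t : ℝ,
        exp ((-Complex.I * t) • B) ψ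
          = Complex.exp (-Complex.I * α * t) • exp ((-Complex.I * t) • H0) ψ) ↔
      (∀ t : ℝ, exp ((-Complex.I * t) • B) ψ = exp ((-Complex.I * t) • A) ψ) := by
    constructor
    · intro h t; rw [h t, hexp t]
    · intro h t; rw [h t, ← hexp t]
  rw [hcond]
  have hBAD : B = A + D := by rw [hA, hB, hD]; abel
  have hDBA : D = B - A := by rw [hA, hB, hD]; abel
  constructor
  · -- forward direction
    intro h
    have h2 : ∀ t : ℝ, exp (t • ((-Complex.I) • B)) ψ = exp (t • ((-Complex.I) • A)) ψ := by
      intro t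
      have hc : ∀ T : H →L[ℂ] H, (t • ((-Complex.I) • T) : H →L[ℂ] H)
          = (-Complex.I * t) • T := by
        intro T
        rw [show (t • ((-Complex.I) • T) : H →L[ℂ] H) = (t : ℂ) • ((-Complex.I) • T) from rfl,
          smul_smul, mul_comm]
      rw [hc B, hc A]
      exact h t
    have hpowI := aux_pow_of_exp h2
    have hpow : ∀ k : ℕ, (B ^ k) ψ = (A ^ k) ψ := by
      intro k
      have := hpowI k
      rw [smul_pow, smul_pow, ContinuousLinearMap.smul_apply, ContinuousLinearMap.smul_apply]
        at this
      exact smul_right_injective H (pow_ne_zero k (neg_ne_zero.mpr Complex.I_ne_zero)) this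
    have hDA : ∀ k : ℕ, D ((A ^ k) ψ) = 0 := by
      intro k
      have : D ((A ^ k) ψ) = (B ^ (k + 1)) ψ - (A ^ (k + 1)) ψ := by
        rw [hDBA, ContinuousLinearMap.sub_apply, ← hpow k,
          pow_succ', pow_succ', ContinuousLinearMap.mul_apply, ContinuousLinearMap.mul_apply,
          hpow k]
      rw [this, hpow (k + 1), sub_self]
    intro k _
    have haev : Polynomial.aeval A ((Polynomial.X - Polynomial.C (α : ℂ)) ^ k) = H0 ^ k := by
      rw [map_pow]
      congr 1
      rw [map_sub, Polynomial.aeval_X, Polynomial.aeval_C, Algebra.algebraMap_eq_smul_one, hA]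
      abel
    have := aux_aeval hDA ((Polynomial.X - Polynomial.C (α : ℂ)) ^ k)
    rwa [haev] at this
  · -- reverse direction
    intro hker
    have hker' : ∀ m : ℕ, D ((H0 ^ m) ψ) = 0 := by
      intro m
      have hmem := aux_span (T := H0) (ψ := ψ) hn m
      have hsub : Submodule.span ℂ ((fun k : ℕ => (H0 ^ k) ψ) '' Set.Iio n)
          ≤ LinearMap.ker (D : H →ₗ[ℂ] H) := by
        rw [Submodule.span_le]
        rintro x ⟨k, hk, rfl⟩
        exact LinearMap.mem_ker.mpr (hker k hk)
      exact LinearMap.mem_ker.mp (hsub hmem)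
    have hDA : ∀ m : ℕ, D ((A ^ m) ψ) = 0 := by
      intro m
      have haev : Polynomial.aeval H0 ((Polynomial.X + Polynomial.C (α : ℂ)) ^ m) = A ^ m := by
        rw [map_pow]
        congr 1
        rw [map_add, Polynomial.aeval_X, Polynomial.aeval_C, Algebra.algebraMap_eq_smul_one, hA]
      have := aux_aeval hker' ((Polynomial.X + Polynomial.C (α : ℂ)) ^ m)
      rwa [haev] at this
    have hpow : ∀ k : ℕ, (B ^ k) ψ = (A ^ k) ψ := by
      intro k
      induction k with
      | zero => rfl
      | succ k ih =>
        rw [pow_succ', pow_succ', ContinuousLinearMap.mul_apply, ContinuousLinearMap.mul_apply,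
          ih, hBAD, ContinuousLinearMap.add_apply, hDA k, add_zero]
    intro t
    exact aux_exp_of_pow hpow (-Complex.I * t)
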